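/- Instantaneous change of variables: let F : ℝ × ℝⁿ → ℝⁿ be a C¹ vector field, let p : ℝ × ℝⁿ → ℝ be C¹, strictly positive, and satisfy the continuity equation ∂p/∂t + ∇ₓ·(p F) = 0. Let X : [0,T] → ℝⁿ be a C¹ solution of the ODE dX/dt = F(t, X(t)). Then for all t ∈ [0,T], (d/dt) log p(t, X(t)) = −(∇ₓ·F)(t, X(t)). -/

import Mathlib

open scoped BigOperators RealInnerProductSpace

/-- Divergence of a vector field on `ℝⁿ`: `∇·F = Σᵢ ∂Fᵢ/∂xᵢ`. -/
noncomputable def diverg {n : ℕ} (F : EuclideanSpace ℝ (Fin n) → EuclideanSpace ℝ (Fin n))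
    (x : EuclideanSpace ℝ (Fin n)) : ℝ :=
  ∑ i, fderiv ℝ F x (EuclideanSpace.single i 1) i

/-- Laplacian `Δf = ∇·∇f`. -/
noncomputable def lap {n : ℕ} (f : EuclideanSpace ℝ (Fin n) → ℝ)
    (x : EuclideanSpace ℝ (Fin n)) : ℝ :=
  diverg (fun y => gradient f y) x

/-- Any continuous linear functional on `ℝⁿ` is determined by its values on the basis. -/
lemma clm_sum_single {n : ℕ} (C : EuclideanSpace ℝ (Fin n) →L[ℝ] ℝ)
    (v : EuclideanSpace ℝ (Fin n)) :
    ∑ i, C (EuclideanSpace.single i 1) * v i = C v := by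
  have hv : v = ∑ i, v i • EuclideanSpace.single i (1:ℝ) := by
    have := (EuclideanSpace.basisFun (Fin n) ℝ).toBasis.sum_repr v
    simpa [EuclideanSpace.basisFun_toBasis] using this.symm
  conv_rhs => rw [hv]
  rw [map_sum]
  refine Finset.sum_congr rfl fun i _ => ?_
  rw [map_smul]
  simp [mul_comm]

/-- instantaneous change of variables: if `p > 0` solves the
continuity equation `∂p/∂t + ∇ₓ·(pF) = 0` and `X` solves `dX/dt = F(t, X(t))`,
then `(d/dt) log p(t, X(t)) = −(∇ₓ·F)(t, X(t))` on `[0, T]`. -/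
theorem stmt_11 {n : ℕ} (T : ℝ)
    (F : ℝ → EuclideanSpace ℝ (Fin n) → EuclideanSpace ℝ (Fin n))
    (p : ℝ → EuclideanSpace ℝ (Fin n) → ℝ)
    (X : ℝ → EuclideanSpace ℝ (Fin n))
    (hF : ContDiff ℝ 1 (fun q : ℝ × EuclideanSpace ℝ (Fin n) => F q.1 q.2))
    (hp : ContDiff ℝ 1 (fun q : ℝ × EuclideanSpace ℝ (Fin n) => p q.1 q.2))
    (hppos : ∀ t x, 0 < p t x)
    (hcont : ∀ t x, deriv (fun τ => p τ x) t + diverg (fun y => p t y • F t y) x = 0)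
    (hX : ∀ t ∈ Set.Icc (0 : ℝ) T, HasDerivAt X (F t (X t)) t) :
    ∀ t ∈ Set.Icc (0 : ℝ) T,
      deriv (fun τ => Real.log (p τ (X τ))) t = - diverg (F t) (X t) := by
  intro t ht
  set x := X t with hx
  have hPd : HasFDerivAt (fun q : ℝ × EuclideanSpace ℝ (Fin n) => p q.1 q.2)
      (fderiv ℝ (fun q : ℝ × EuclideanSpace ℝ (Fin n) => p q.1 q.2) (t, x)) (t, x) :=
    (hp.differentiable one_ne_zero (t, x)).hasFDerivAt
  set L := fderiv ℝ (fun q : ℝ × EuclideanSpace ℝ (Fin n) => p q.1 q.2) (t, x) with hLdef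
  have hFd : HasFDerivAt (fun q : ℝ × EuclideanSpace ℝ (Fin n) => F q.1 q.2)
      (fderiv ℝ (fun q : ℝ × EuclideanSpace ℝ (Fin n) => F q.1 q.2) (t, x)) (t, x) :=
    (hF.differentiable one_ne_zero (t, x)).hasFDerivAt
  set M := fderiv ℝ (fun q : ℝ × EuclideanSpace ℝ (Fin n) => F q.1 q.2) (t, x) with hMdef
  -- time-slice derivative of p
  have hslt : HasDerivAt (fun τ => p τ x) (L (1, 0)) t := by
    have h1 : HasDerivAt (fun τ : ℝ => (τ, x)) ((1:ℝ), (0 : EuclideanSpace ℝ (Fin n))) t :=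
      (hasDerivAt_id t).prodMk (hasDerivAt_const t x)
    exact hPd.comp_hasDerivAt t h1
  -- space-slice derivatives
  have hinr : HasFDerivAt (fun y : EuclideanSpace ℝ (Fin n) => ((t, y) : ℝ × EuclideanSpace ℝ (Fin n)))
      (ContinuousLinearMap.inr ℝ ℝ (EuclideanSpace ℝ (Fin n))) x :=
    hasFDerivAt_prodMk_right t x
  have hslx : HasFDerivAt (fun y => p t y)
      (L.comp (ContinuousLinearMap.inr ℝ ℝ (EuclideanSpace ℝ (Fin n)))) x := hPd.comp x hinr
  have hFx : HasFDerivAt (fun y => F t y)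
      (M.comp (ContinuousLinearMap.inr ℝ ℝ (EuclideanSpace ℝ (Fin n)))) x := hFd.comp x hinr
  set Lx := L.comp (ContinuousLinearMap.inr ℝ ℝ (EuclideanSpace ℝ (Fin n))) with hLx
  set Mx := M.comp (ContinuousLinearMap.inr ℝ ℝ (EuclideanSpace ℝ (Fin n))) with hMx
  -- divergence of F t at x
  have hdivF : diverg (F t) x = ∑ i, Mx (EuclideanSpace.single i 1) i := by
    unfold diverg
    rw [hFx.fderiv]
  -- product rule and divergence of p • F
  have hprod : HasFDerivAt (fun y => p t y • F t y)
      (p t x • Mx + Lx.smulRight (F t x)) x := hslx.smul hFx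
  have hdivprod : diverg (fun y => p t y • F t y) x
      = p t x * diverg (F t) x + Lx (F t x) := by
    unfold diverg
    rw [hprod.fderiv, hFx.fderiv, Finset.mul_sum, ← clm_sum_single Lx (F t x), ← Finset.sum_add_distrib]
    refine Finset.sum_congr rfl fun i _ => ?_
    simp [ContinuousLinearMap.smulRight_apply, mul_comm]
  -- full derivative along the flow
  have hq : HasDerivAt (fun τ : ℝ => ((τ, X τ) : ℝ × EuclideanSpace ℝ (Fin n)))
      ((1 : ℝ), F t x) t := (hasDerivAt_id t).prodMk (hX t ht)
  have hcomp : HasDerivAt (fun τ => p τ (X τ)) (L (1, F t x)) t :=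
    HasFDerivAt.comp_hasDerivAt (l := fun q : ℝ × EuclideanSpace ℝ (Fin n) => p q.1 q.2) t hPd hq
  have hne : p t x ≠ 0 := (hppos t x).ne'
  have hlog : HasDerivAt (fun τ => Real.log (p τ (X τ))) (L (1, F t x) / p t x) t :=
    hcomp.log hne
  rw [hlog.deriv]
  -- split L (1, F t x)
  have hsplit : L (1, F t x) = L (1, 0) + Lx (F t x) := by
    have h0 : ((1:ℝ), F t x) = ((1:ℝ), (0 : EuclideanSpace ℝ (Fin n))) + ((0:ℝ), F t x) := by
      simp [Prod.ext_iff]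
    rw [h0, map_add]
    rfl
  -- continuity equation
  have hce := hcont t x
  rw [hslt.deriv] at hce
  rw [hdivprod] at hce
  have hL10 : L (1, 0) = -(p t x * diverg (F t) x + Lx (F t x)) := by linarith
  rw [hsplit, hL10]
  field_simp
  ring
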